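/- The Grassmann Fourier transform preserves the ℓ¹ norm: for any element f of the Grassmann algebra in the generators ψ_i^± with ℓ¹ norm ‖f‖ = Σ_S |f_S|, its Grassmann Fourier transform f̂(η) = ∫dψ exp(−i Σ_i (η_i⁺ψ_i⁻ + ψ_i⁺η_i⁻)) f(ψ) satisfies ‖f̂‖ = ‖f‖; in particular each coefficient of f̂ equals a coefficient of f multiplied by a complex number of modulus 1. -/

import Mathlib

open Finset

/-- A Grassmann algebra with two independent families of anticommuting generators
`ψ i ε` and `η i ε` (`ε : Bool`, `true` = `+`, `false` = `−`), with Berezin integration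
over the single `ψ` and `η` generators, defined by the standard rules. -/
structure GrassmannSetup (n : ℕ) where
  A : Type
  [ring : Ring A]
  [algebra : Algebra ℂ A]
  ψ : Fin n → Bool → A
  η : Fin n → Bool → A
  anticomm_ψψ : ∀ i ε j ε', ψ i ε * ψ j ε' = -(ψ j ε' * ψ i ε)
  anticomm_ψη : ∀ i ε j ε', ψ i ε * η j ε' = -(η j ε' * ψ i ε)
  anticomm_ηη : ∀ i ε j ε', η i ε * η j ε' = -(η j ε' * η i ε)
  intη : Fin n → Bool → (A →ₗ[ℂ] A)
  intη_one : ∀ i ε, intη i ε 1 = 0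
  intη_η_mul : ∀ i ε j ε' f, intη i ε (η j ε' * f)
      = (if i = j ∧ ε = ε' then f else 0) - η j ε' * intη i ε f
  intη_ψ_mul : ∀ i ε j ε' f, intη i ε (ψ j ε' * f) = -(ψ j ε' * intη i ε f)
  intψ : Fin n → Bool → (A →ₗ[ℂ] A)
  intψ_one : ∀ i ε, intψ i ε 1 = 0
  intψ_ψ_mul : ∀ i ε j ε' f, intψ i ε (ψ j ε' * f)
      = (if i = j ∧ ε = ε' then f else 0) - ψ j ε' * intψ i ε f
  intψ_η_mul : ∀ i ε j ε' f, intψ i ε (η j ε' * f) = -(η j ε' * intψ i ε f)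

attribute [instance] GrassmannSetup.ring GrassmannSetup.algebra

/-- Truncated exponential `Σ_{k=0}^{N} x^k / k!` (exact by nilpotency for large `N`). -/
noncomputable def gexp {n : ℕ} (G : GrassmannSetup n) (N : ℕ) (x : G.A) : G.A :=
  ∑ k ∈ Finset.range (N + 1), ((Nat.factorial k : ℂ))⁻¹ • x ^ k

/-- The Berezin integral over all `ψ` generators, `∫dψ := ∏_i ∫dψ_i⁺ ∫dψ_i⁻`. -/
noncomputable def intψAll {n : ℕ} (G : GrassmannSetup n) : G.A →ₗ[ℂ] G.A :=
  ((List.finRange n).map fun i => (G.intψ i true).comp (G.intψ i false)).foldr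
    (fun f g => f.comp g) LinearMap.id

/-- The Grassmann Fourier transform
`f̂(η) = ∫dψ exp(−i Σ_i (η_i⁺ψ_i⁻ + ψ_i⁺η_i⁻)) f(ψ)`. -/
noncomputable def grassmannFourier {n : ℕ} (G : GrassmannSetup n) (f : G.A) : G.A :=
  intψAll G (gexp G (2 * n)
      ((-Complex.I) • ∑ i, (G.η i true * G.ψ i false + G.ψ i true * G.η i false)) * f)

/-- The ordered monomial `ψ^S` (in the fixed order `ψ_1⁺ ψ_1⁻ ψ_2⁺ ψ_2⁻ ⋯`). -/
noncomputable def ψMonomial {n : ℕ} (G : GrassmannSetup n)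
    (S : Finset (Fin n × Bool)) : G.A :=
  ((List.finRange n).map fun i =>
    (if (i, true) ∈ S then G.ψ i true else 1) *
    (if (i, false) ∈ S then G.ψ i false else 1)).prod

/-- The ordered monomial `η^T`. -/
noncomputable def ηMonomial {n : ℕ} (G : GrassmannSetup n)
    (T : Finset (Fin n × Bool)) : G.A :=
  ((List.finRange n).map fun i =>
    (if (i, true) ∈ T then G.η i true else 1) *
    (if (i, false) ∈ T then G.η i false else 1)).prod

namespace GFT

abbrev Sym (n : ℕ) := (Fin n × Bool) ⊕ (Fin n × Bool)

variable {n : ℕ} (G : GrassmannSetup n)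

noncomputable def gval : Sym n → G.A
  | .inl p => G.ψ p.1 p.2
  | .inr p => G.η p.1 p.2

lemma gval_anticomm (s t : Sym n) : gval G s * gval G t = -(gval G t * gval G s) := by
  rcases s with p | p <;> rcases t with q | q <;> simp only [gval]
  · exact G.anticomm_ψψ _ _ _ _
  · exact G.anticomm_ψη _ _ _ _
  · rw [G.anticomm_ψη, neg_neg]
  · exact G.anticomm_ηη _ _ _ _

lemma eq_zero_of_eq_neg {x : G.A} (h : x = -x) : x = 0 := by
  have h2 : (2:ℂ) • x = 0 := by
    rw [two_smul]; nth_rewrite 1 [h]; abel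
  have := congrArg (fun z => ((2:ℂ)⁻¹) • z) h2
  simpa [smul_smul] using this

lemma gval_sq (s : Sym n) : gval G s * gval G s = 0 :=
  eq_zero_of_eq_neg G (gval_anticomm G s s)

noncomputable def wval (l : List (Sym n)) : G.A := (l.map (gval G)).prod

@[simp] lemma wval_nil : wval G ([] : List (Sym n)) = 1 := rfl

@[simp] lemma wval_cons (s : Sym n) (l : List (Sym n)) :
    wval G (s :: l) = gval G s * wval G l := by simp [wval]

lemma wval_append (l m : List (Sym n)) :
    wval G (l ++ m) = wval G l * wval G m := by simp [wval]

lemma wval_swap (s t : Sym n) (l : List (Sym n)) :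
    wval G (s :: t :: l) = -wval G (t :: s :: l) := by
  simp only [wval_cons, ← mul_assoc, gval_anticomm G s t, neg_mul]

lemma wval_dup (s : Sym n) (l : List (Sym n)) :
    wval G (s :: s :: l) = 0 := by
  simp [← mul_assoc, gval_sq]

lemma gval_mul_wval (s : Sym n) (l : List (Sym n)) :
    gval G s * wval G l = ((-1:ℂ)^l.length) • (wval G l * gval G s) := by
  induction l with
  | nil => simp
  | cons t l ih =>
    rw [wval_cons, ← mul_assoc, gval_anticomm G s t, neg_mul, mul_assoc, ih]
    simp [pow_succ, mul_smul, mul_assoc]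

lemma commute_wval_of_commute_gval {z : G.A} (h : ∀ s, Commute z (gval G s))
    (l : List (Sym n)) : Commute z (wval G l) := by
  induction l with
  | nil => simpa using Commute.one_right z
  | cons s l ih => rw [wval_cons]; exact (h s).mul_right ih

lemma commute_even_wval (l : List (Sym n)) (hl : l.length % 2 = 0) (s : Sym n) :
    Commute (wval G l) (gval G s) := by
  have := gval_mul_wval G s l
  have h1 : ((-1:ℂ))^l.length = 1 := Even.neg_one_pow (Nat.even_iff.2 hl)
  rw [h1, one_smul] at this
  exact Commute.symm this

end GFT
-- chunk 2 (appended to c1 content for testing)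
namespace GFT
variable {n : ℕ} (G : GrassmannSetup n)

lemma intψ_gval_mul (i : Fin n) (ε : Bool) (s : Sym n) (v : G.A) :
    G.intψ i ε (gval G s * v)
      = (if s = Sum.inl (i, ε) then v else 0) - gval G s * G.intψ i ε v := by
  rcases s with p | p
  · simp only [gval]
    rw [G.intψ_ψ_mul]
    congr 1
    simp [Prod.ext_iff, eq_comm, and_comm]
  · simp only [gval]
    rw [G.intψ_η_mul]
    simp

lemma intψ_wval_cons (i : Fin n) (ε : Bool) (s : Sym n) (l : List (Sym n)) :
    G.intψ i ε (wval G (s :: l))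
      = (if s = Sum.inl (i, ε) then wval G l else 0)
        - gval G s * G.intψ i ε (wval G l) := by
  rw [wval_cons, intψ_gval_mul]

@[simp] lemma intψ_wval_nil (i : Fin n) (ε : Bool) :
    G.intψ i ε (wval G ([] : List (Sym n))) = 0 := by
  rw [wval_nil]; exact G.intψ_one i ε

lemma intψ_wval_not_mem_mul (i : Fin n) (ε : Bool) (l : List (Sym n))
    (h : Sum.inl (i,ε) ∉ l) (v : G.A) :
    G.intψ i ε (wval G l * v) = ((-1:ℂ)^l.length) • (wval G l * G.intψ i ε v) := by
  induction l with
  | nil => simp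
  | cons s l ih =>
    have hs : s ≠ Sum.inl (i,ε) := fun hc => h (hc ▸ (by simp : s ∈ s :: l))
    have ht : Sum.inl (i,ε) ∉ l := fun hc => h (List.mem_cons_of_mem _ hc)
    rw [wval_cons, mul_assoc, intψ_gval_mul, if_neg hs, zero_sub, ih ht]
    rw [List.length_cons, pow_succ, mul_smul_comm]
    rw [mul_comm ((-1:ℂ)^l.length) (-1), ← smul_smul]
    simp [mul_assoc]

lemma intψ_wval_zero (i : Fin n) (ε : Bool) (l : List (Sym n))
    (h : Sum.inl (i,ε) ∉ l) : G.intψ i ε (wval G l) = 0 := by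
  have := intψ_wval_not_mem_mul G i ε l h 1
  simp only [mul_one] at this
  rw [this, G.intψ_one]
  simp

lemma intψ_wval_mul_wval (i : Fin n) (ε : Bool) (w : List (Sym n))
    (hw : Sum.inl (i,ε) ∉ w) (l : List (Sym n)) :
    G.intψ i ε (wval G l * wval G w)
      = G.intψ i ε (wval G l) * wval G w := by
  induction l with
  | nil => simp [intψ_wval_zero G i ε w hw, G.intψ_one]
  | cons s l ih =>
    rw [wval_cons, mul_assoc, intψ_gval_mul, intψ_gval_mul, ih]
    split_ifs <;> simp [sub_mul, mul_assoc]

def Wgen (P : Sym n → Prop) : Submodule ℂ G.A :=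
  Submodule.span ℂ {a | ∃ l : List (Sym n), (∀ s ∈ l, P s) ∧ wval G l = a}

lemma wval_mem_Wgen {P : Sym n → Prop} {l : List (Sym n)} (h : ∀ s ∈ l, P s) :
    wval G l ∈ Wgen G P := Submodule.subset_span ⟨l, h, rfl⟩

lemma Wgen_mono {P Q : Sym n → Prop} (h : ∀ s, P s → Q s) : Wgen G P ≤ Wgen G Q :=
  Submodule.span_mono (fun _ ⟨l, hl, hv⟩ => ⟨l, fun s hs => h s (hl s hs), hv⟩)

lemma one_mem_Wgen (P : Sym n → Prop) : (1 : G.A) ∈ Wgen G P := by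
  have := wval_mem_Wgen G (P := P) (l := []) (by simp)
  simpa using this

lemma Wgen_mul_mem {P : Sym n → Prop} {z w : G.A} (hz : z ∈ Wgen G P)
    (hw : w ∈ Wgen G P) : z * w ∈ Wgen G P := by
  induction hz using Submodule.span_induction with
  | mem a ha =>
    obtain ⟨l, hl, rfl⟩ := ha
    induction hw using Submodule.span_induction with
    | mem b hb =>
      obtain ⟨m, hm, rfl⟩ := hb
      rw [← wval_append]
      exact wval_mem_Wgen G (by
        intro s hs
        rcases List.mem_append.1 hs with h | h
        · exact hl s h
        · exact hm s h)
    | zero => simp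
    | add x y hx hy ihx ihy => rw [mul_add]; exact add_mem ihx ihy
    | smul c x hx ihx => rw [mul_smul_comm]; exact Submodule.smul_mem _ c ihx
  | zero => simp
  | add x y hx hy ihx ihy => rw [add_mul]; exact add_mem ihx ihy
  | smul c x hx ihx => rw [smul_mul_assoc]; exact Submodule.smul_mem _ c ihx

abbrev Wall := Wgen G (fun _ => True)

lemma gval_mul_mem {z : G.A} (hz : z ∈ Wall G) (s : Sym n) :
    gval G s * z ∈ Wall G := by
  refine Wgen_mul_mem G ?_ hz
  have := wval_mem_Wgen G (P := fun _ => True) (l := [s]) (by simp)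
  simpa [wval] using this

lemma intψ_mem {z : G.A} (hz : z ∈ Wall G) (i : Fin n) (ε : Bool) :
    G.intψ i ε z ∈ Wall G := by
  induction hz using Submodule.span_induction with
  | mem a ha =>
    obtain ⟨l, -, rfl⟩ := ha
    induction l with
    | nil => simp [G.intψ_one]
    | cons s l ih =>
      rw [intψ_wval_cons]
      refine sub_mem ?_ (gval_mul_mem G ih s)
      split_ifs
      · exact wval_mem_Wgen G (by simp)
      · simp
  | zero => simp
  | add x y hx hy ihx ihy => rw [map_add]; exact add_mem ihx ihy
  | smul c x hx ihx => rw [map_smul]; exact Submodule.smul_mem _ c ihx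

lemma intψ_mul_wval_of_mem {z : G.A} (hz : z ∈ Wall G) (i : Fin n) (ε : Bool)
    {w : List (Sym n)} (hw : Sum.inl (i,ε) ∉ w) :
    G.intψ i ε (z * wval G w) = G.intψ i ε z * wval G w := by
  induction hz using Submodule.span_induction with
  | mem a ha => obtain ⟨l, _, rfl⟩ := ha; exact intψ_wval_mul_wval G i ε w hw l
  | zero => simp
  | add x y hx hy ihx ihy => rw [add_mul, map_add, map_add, ihx, ihy, add_mul]
  | smul c x hx ihx => rw [smul_mul_assoc, map_smul, map_smul, ihx, smul_mul_assoc]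

end GFT
namespace GFT
variable {n : ℕ} (G : GrassmannSetup n)

def avoids (i : Fin n) (s : Sym n) : Prop := ∀ ε : Bool, s ≠ Sum.inl (i, ε)

def onlyIdx (i : Fin n) : Sym n → Prop
  | .inl p => p.1 = i
  | .inr p => p.1 = i

lemma onlyIdx_avoids {i j : Fin n} (hij : j ≠ i) {s : Sym n} (h : onlyIdx i s) :
    avoids j s := by
  rcases s with p | p
  · intro ε hc
    cases hc
    exact hij (by simpa [onlyIdx] using h)
  · intro ε hc; cases hc

lemma F_gval_mul (i : Fin n) {s : Sym n} (hs : avoids i s) (v : G.A) :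
    G.intψ i true (G.intψ i false (gval G s * v))
      = gval G s * G.intψ i true (G.intψ i false v) := by
  rw [intψ_gval_mul, if_neg (hs false), zero_sub, map_neg, intψ_gval_mul,
    if_neg (hs true), zero_sub, neg_neg]

lemma F_wval_mul (i : Fin n) {u : List (Sym n)} (hu : ∀ s ∈ u, avoids i s) (v : G.A) :
    G.intψ i true (G.intψ i false (wval G u * v))
      = wval G u * G.intψ i true (G.intψ i false v) := by
  induction u with
  | nil => simp
  | cons s u ih =>
    rw [wval_cons, mul_assoc, F_gval_mul G i (hu s (by simp)),
      ih (fun t ht => hu t (List.mem_cons_of_mem _ ht)), mul_assoc]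

lemma F_mul_of_avoids {i : Fin n} {z : G.A} (hz : z ∈ Wgen G (avoids i)) (v : G.A) :
    G.intψ i true (G.intψ i false (z * v))
      = z * G.intψ i true (G.intψ i false v) := by
  induction hz using Submodule.span_induction with
  | mem a ha => obtain ⟨l, hl, rfl⟩ := ha; exact F_wval_mul G i hl v
  | zero => simp
  | add x y hx hy ihx ihy => rw [add_mul, map_add, map_add, ihx, ihy, add_mul]
  | smul c x hx ihx => rw [smul_mul_assoc, map_smul, map_smul, ihx, smul_mul_assoc]

lemma F_mul_wval {z : G.A} (hz : z ∈ Wall G) (i : Fin n) {w : List (Sym n)}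
    (hw : ∀ ε : Bool, Sum.inl (i,ε) ∉ w) :
    G.intψ i true (G.intψ i false (z * wval G w))
      = G.intψ i true (G.intψ i false z) * wval G w := by
  rw [intψ_mul_wval_of_mem G hz i false (hw false),
    intψ_mul_wval_of_mem G (intψ_mem G hz i false) i true (hw true)]

lemma commute_of_mem_Wall {z w : G.A} (hc : ∀ l : List (Sym n), Commute z (wval G l))
    (hw : w ∈ Wall G) : Commute z w := by
  induction hw using Submodule.span_induction with
  | mem a ha => obtain ⟨l, -, rfl⟩ := ha; exact hc l
  | zero => exact Commute.zero_right z
  | add x y hx hy ihx ihy => exact ihx.add_right ihy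
  | smul c x hx ihx => exact ihx.smul_right c

end GFT
namespace GFT
variable {n : ℕ} (G : GrassmannSetup n)

lemma add_pow_eq_zero {x y : G.A} {p q : ℕ} (h : Commute x y)
    (hx : x^(p+1) = 0) (hy : y^(q+1) = 0) : (x+y)^(p+q+1) = 0 := by
  rw [h.add_pow]
  apply Finset.sum_eq_zero
  intro m hm
  rcases le_or_gt (p+1) m with hle | hlt
  · rw [pow_eq_zero_of_le hle hx, zero_mul, zero_mul]
  · have hq : q+1 ≤ p+q+1 - m := by omega
    rw [pow_eq_zero_of_le hq hy, mul_zero, zero_mul]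

lemma gexp_zero (N : ℕ) : gexp G N (0 : G.A) = 1 := by
  rw [gexp]
  refine (Finset.sum_eq_single_of_mem 0 (Finset.mem_range.2 (Nat.succ_pos N))
    (fun k _ hk => by rw [zero_pow hk, smul_zero])).trans (by simp)

lemma gexp_eq_of_pow_eq_zero {x : G.A} {p N M : ℕ} (hx : x^(p+1) = 0)
    (hN : p ≤ N) (hM : p ≤ M) : gexp G N x = gexp G M x := by
  have key : ∀ K, p ≤ K → gexp G K x
      = ∑ k ∈ Finset.range (p+1), ((Nat.factorial k : ℂ))⁻¹ • x ^ k := by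
    intro K hK
    rw [gexp]
    refine (Finset.sum_subset (Finset.range_subset_range.2 (by omega)) ?_).symm
    intro k _ hk
    have : p + 1 ≤ k := by
      by_contra hc
      exact hk (Finset.mem_range.2 (by omega))
    rw [pow_eq_zero_of_le this hx, smul_zero]
  rw [key N hN, key M hM]

lemma gexp_add_mul {x y : G.A} {p q N : ℕ} (h : Commute x y) (hx : x^(p+1) = 0)
    (hy : y^(q+1) = 0) (hN : p + q ≤ N) :
    gexp G N (x + y) = gexp G N x * gexp G N y := by
  classical
  set f : ℕ × ℕ → G.A :=
    fun ab => ((ab.1.factorial : ℂ)⁻¹ * (ab.2.factorial : ℂ)⁻¹) • (x^ab.1 * y^ab.2)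
    with hf
  have hfzero : ∀ a b, N < a + b → f (a, b) = 0 := by
    intro a b hab
    rcases le_or_gt (p+1) a with hle | hlt
    · simp [hf, pow_eq_zero_of_le hle hx]
    · have : q + 1 ≤ b := by omega
      simp [hf, pow_eq_zero_of_le this hy]
  have hR : gexp G N x * gexp G N y
      = ∑ a ∈ Finset.range (N+1), ∑ b ∈ Finset.range (N+1), f (a, b) := by
    rw [gexp, gexp, Finset.sum_mul_sum]
    refine Finset.sum_congr rfl fun a _ => Finset.sum_congr rfl fun b _ => ?_
    rw [hf, smul_mul_smul_comm]
  have hL : gexp G N (x + y)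
      = ∑ k ∈ Finset.range (N+1), ∑ m ∈ Finset.range (k+1), f (m, k - m) := by
    rw [gexp]
    refine Finset.sum_congr rfl fun k _ => ?_
    rw [h.add_pow, Finset.smul_sum]
    refine Finset.sum_congr rfl fun m hm => ?_
    have hmk : m ≤ k := by
      have := Finset.mem_range.1 hm; omega
    have hcoef : ((k.factorial : ℂ))⁻¹ * (k.choose m : ℂ)
        = ((m.factorial : ℂ))⁻¹ * (((k - m).factorial : ℂ))⁻¹ := by
      have hch : (m.factorial : ℂ) * ((k-m).factorial : ℂ) * (k.choose m : ℂ)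
          = (k.factorial : ℂ) := by
        have := Nat.choose_mul_factorial_mul_factorial hmk
        push_cast [← this]
        ring
      have h1 : (m.factorial : ℂ) ≠ 0 := Nat.cast_ne_zero.2 m.factorial_ne_zero
      have h2 : ((k-m).factorial : ℂ) ≠ 0 := Nat.cast_ne_zero.2 (k-m).factorial_ne_zero
      have h3 : (k.factorial : ℂ) ≠ 0 := Nat.cast_ne_zero.2 k.factorial_ne_zero
      have h4 : (k.choose m : ℂ)
          = (k.factorial : ℂ) / ((m.factorial : ℂ) * (((k-m).factorial : ℂ))) := by
        rw [eq_div_iff (mul_ne_zero h1 h2)]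
        linear_combination hch
      rw [h4]
      field_simp
    have hterm : x ^ m * y ^ (k - m) * ((k.choose m : ℕ) : G.A)
        = ((k.choose m : ℕ) : ℂ) • (x ^ m * y ^ (k - m)) := by
      rw [Nat.cast_smul_eq_nsmul ℂ, nsmul_eq_mul]
      exact (Nat.cast_commute (k.choose m) (x ^ m * y ^ (k - m))).eq.symm
    rw [hterm, smul_smul, hcoef, hf]
  rw [hL, hR]
  -- reindex
  have hsig : ∑ k ∈ Finset.range (N+1), ∑ m ∈ Finset.range (k+1), f (m, k - m)
      = ∑ x ∈ (Finset.range (N+1)).sigma (fun k => Finset.range (k+1)),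
          f (x.2, x.1 - x.2) := by rw [Finset.sum_sigma]
  have hprod : ∑ a ∈ Finset.range (N+1), ∑ b ∈ Finset.range (N+1), f (a, b)
      = ∑ x ∈ Finset.range (N+1) ×ˢ Finset.range (N+1), f x := by
    rw [Finset.sum_product]
  rw [hsig, hprod]
  have hfilter : ∑ x ∈ Finset.range (N+1) ×ˢ Finset.range (N+1), f x
      = ∑ x ∈ (Finset.range (N+1) ×ˢ Finset.range (N+1)).filter
          (fun ab => ab.1 + ab.2 ≤ N), f x := by
    refine (Finset.sum_subset (Finset.filter_subset _ _) ?_).symm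
    intro x hx hnx
    have : ¬ (x.1 + x.2 ≤ N) := by
      intro hc
      exact hnx (Finset.mem_filter.2 ⟨hx, hc⟩)
    exact hfzero x.1 x.2 (by omega)
  rw [hfilter]
  refine Finset.sum_nbij' (fun x => (x.2, x.1 - x.2)) (fun ab => ⟨ab.1 + ab.2, ab.1⟩)
    ?_ ?_ ?_ ?_ ?_
  · intro a ha
    simp only [Finset.mem_sigma, Finset.mem_range] at ha
    simp only [Finset.mem_filter, Finset.mem_product, Finset.mem_range]
    omega
  · intro a ha
    simp only [Finset.mem_filter, Finset.mem_product, Finset.mem_range] at ha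
    simp only [Finset.mem_sigma, Finset.mem_range]
    omega
  · rintro ⟨k, m⟩ ha
    simp only [Finset.mem_sigma, Finset.mem_range] at ha
    have hk : m + (k - m) = k := by omega
    simp [hk]
  · rintro ⟨a1, a2⟩ ha
    simp only [Finset.mem_filter, Finset.mem_product, Finset.mem_range] at ha
    simp only [Prod.mk.injEq, true_and]
    omega
  · intro a _
    rfl

end GFT
namespace GFT
variable {n : ℕ} (G : GrassmannSetup n)

lemma list_sum_pow_eq_zero (L : List G.A) (h3 : ∀ z ∈ L, z^3 = 0)
    (hc : ∀ z ∈ L, ∀ w ∈ L, Commute z w) :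
    L.sum ^ (2 * L.length + 1) = 0 := by
  induction L with
  | nil => simp
  | cons z L ih =>
    have hzL : Commute z L.sum :=
      Commute.list_sum_right _ _ (fun w hw => hc z (by simp) w
        (List.mem_cons_of_mem _ hw))
    have hz3 : z^(2+1) = 0 := h3 z (by simp)
    have hs : L.sum^(2*L.length+1) = 0 :=
      ih (fun w hw => h3 w (List.mem_cons_of_mem _ hw))
        (fun w hw v hv => hc w (List.mem_cons_of_mem _ hw) v (List.mem_cons_of_mem _ hv))
    have := add_pow_eq_zero G hzL hz3 hs
    rw [List.sum_cons, List.length_cons]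
    have hexp : 2 * (L.length + 1) + 1 = 2 + (2 * L.length) + 1 := by ring
    rw [hexp]
    exact this
  
lemma gexp_list_sum (L : List G.A) (h3 : ∀ z ∈ L, z^3 = 0)
    (hc : ∀ z ∈ L, ∀ w ∈ L, Commute z w) (N : ℕ) (hN : 2 * L.length ≤ N) :
    gexp G N L.sum = (L.map (fun z => gexp G N z)).prod := by
  induction L with
  | nil => simpa using gexp_zero G N
  | cons z L ih =>
    have hzL : Commute z L.sum :=
      Commute.list_sum_right _ _ (fun w hw => hc z (by simp) w
        (List.mem_cons_of_mem _ hw))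
    have hz3 : z^(2+1) = 0 := h3 z (by simp)
    have hs : L.sum^(2*L.length+1) = 0 :=
      list_sum_pow_eq_zero G L (fun w hw => h3 w (List.mem_cons_of_mem _ hw))
        (fun w hw v hv => hc w (List.mem_cons_of_mem _ hw) v (List.mem_cons_of_mem _ hv))
    rw [List.sum_cons, List.map_cons, List.prod_cons,
      gexp_add_mul G hzL hz3 hs (by simp at hN ⊢; omega)]
    rw [ih (fun w hw => h3 w (List.mem_cons_of_mem _ hw))
      (fun w hw v hv => hc w (List.mem_cons_of_mem _ hw) v (List.mem_cons_of_mem _ hv))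
      (by simp at hN ⊢; omega)]

end GFT
namespace GFT
variable {n : ℕ} (G : GrassmannSetup n)

def pSym (i : Fin n) : Sym n := Sum.inl (i, true)
def mSym (i : Fin n) : Sym n := Sum.inl (i, false)
def PSym (i : Fin n) : Sym n := Sum.inr (i, true)
def MSym (i : Fin n) : Sym n := Sum.inr (i, false)

@[simp] lemma gval_pSym (i : Fin n) : gval G (pSym i) = G.ψ i true := rfl
@[simp] lemma gval_mSym (i : Fin n) : gval G (mSym i) = G.ψ i false := rfl
@[simp] lemma gval_PSym (i : Fin n) : gval G (PSym i) = G.η i true := rfl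
@[simp] lemma gval_MSym (i : Fin n) : gval G (MSym i) = G.η i false := rfl

noncomputable def Efac (i : Fin n) : G.A :=
  1 + (-Complex.I) • (wval G [PSym i, mSym i] + wval G [pSym i, MSym i])
    + wval G [pSym i, mSym i, PSym i, MSym i]

noncomputable def yel (i : Fin n) : G.A :=
  (-Complex.I) • (G.η i true * G.ψ i false + G.ψ i true * G.η i false)

lemma yel_eq (i : Fin n) :
    yel G i = (-Complex.I) • (wval G [PSym i, mSym i] + wval G [pSym i, MSym i]) := by
  simp only [yel, wval, List.map_cons, List.map_nil, List.prod_cons, List.prod_nil, mul_one]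
  rfl

lemma wval_swap_append (l₁ : List (Sym n)) (s t : Sym n) (l₂ : List (Sym n)) :
    wval G (l₁ ++ s :: t :: l₂) = -wval G (l₁ ++ t :: s :: l₂) := by
  induction l₁ with
  | nil => simpa using wval_swap G s t l₂
  | cons a l₁ ih => simp only [List.cons_append, wval_cons, ih, mul_neg]

lemma wval_sq_two (s t : Sym n) : wval G [s, t] * wval G [s, t] = 0 := by
  rw [← wval_append]
  have h1 : ([s, t] ++ [s, t] : List (Sym n)) = [s] ++ t :: s :: [t] := rfl
  rw [h1, wval_swap_append]
  have h2 : ([s] ++ s :: t :: [t] : List (Sym n)) = s :: s :: [t, t] := rfl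
  rw [h2, wval_dup, neg_zero]

lemma commute_even_wval' {l : List (Sym n)} (hl : l.length % 2 = 0)
    (m : List (Sym n)) : Commute (wval G l) (wval G m) :=
  commute_wval_of_commute_gval G (fun s => commute_even_wval G l hl s) m

lemma uv_eq (i : Fin n) : wval G [PSym i, mSym i] * wval G [pSym i, MSym i]
    = - wval G [pSym i, mSym i, PSym i, MSym i] := by
  rw [← wval_append]
  have h1 : ([PSym i, mSym i] ++ [pSym i, MSym i] : List (Sym n))
      = [PSym i] ++ mSym i :: pSym i :: [MSym i] := rfl
  rw [h1, wval_swap_append]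
  have h2 : ([PSym i] ++ pSym i :: mSym i :: [MSym i] : List (Sym n))
      = [] ++ PSym i :: pSym i :: [mSym i, MSym i] := rfl
  rw [h2, wval_swap_append]
  have h3 : ([] ++ pSym i :: PSym i :: [mSym i, MSym i] : List (Sym n))
      = [pSym i] ++ PSym i :: mSym i :: [MSym i] := rfl
  rw [h3, wval_swap_append]
  simp

lemma yel_cube (i : Fin n) : (yel G i)^3 = 0 := by
  rw [yel_eq, smul_pow]
  have hcomm : Commute (wval G [PSym i, mSym i]) (wval G [pSym i, MSym i]) :=
    commute_even_wval' G (by simp) _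
  have h := add_pow_eq_zero G (p := 1) (q := 1) hcomm
    (by rw [pow_two]; exact wval_sq_two G _ _)
    (by rw [pow_two]; exact wval_sq_two G _ _)
  rw [show (1+1+1 : ℕ) = 3 from rfl] at h
  rw [h, smul_zero]

lemma yel_sq (i : Fin n) :
    (Nat.factorial 2 : ℂ)⁻¹ • (yel G i)^2 = wval G [pSym i, mSym i, PSym i, MSym i] := by
  have hcomm : Commute (wval G [PSym i, mSym i]) (wval G [pSym i, MSym i]) :=
    commute_even_wval' G (by simp) _
  have hsq : (wval G [PSym i, mSym i] + wval G [pSym i, MSym i])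
      * (wval G [PSym i, mSym i] + wval G [pSym i, MSym i])
      = (-2 : ℂ) • wval G [pSym i, mSym i, PSym i, MSym i] := by
    rw [add_mul, mul_add, mul_add, wval_sq_two, wval_sq_two, ← hcomm.eq, uv_eq]
    rw [zero_add, add_zero, ← two_smul ℂ, smul_neg, ← neg_smul]
  rw [yel_eq, smul_pow, pow_two, pow_two, hsq, smul_smul, smul_smul]
  have hco : (Nat.factorial 2 : ℂ)⁻¹ * (-Complex.I * -Complex.I) * (-2) = 1 := by
    have : -Complex.I * -Complex.I = -1 := by
      rw [neg_mul_neg, Complex.I_mul_I]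
    rw [this]
    norm_num [Nat.factorial]
  rw [hco, one_smul]

lemma gexp_yel (i : Fin n) (N : ℕ) (hN : 2 ≤ N) : gexp G N (yel G i) = Efac G i := by
  rw [gexp_eq_of_pow_eq_zero G (p := 2) (yel_cube G i) (by omega) (le_refl 2)]
  rw [gexp]
  rw [Finset.sum_range_succ, Finset.sum_range_succ, Finset.sum_range_succ,
    Finset.sum_range_zero]
  rw [Efac, yel_sq]
  simp [Nat.factorial, yel]

lemma commute_yel (i j : Fin n) : Commute (yel G i) (yel G j) := by
  rw [yel_eq, yel_eq]
  refine Commute.smul_left (Commute.smul_right ?_ _) _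
  refine Commute.add_left (Commute.add_right ?_ ?_) (Commute.add_right ?_ ?_) <;>
    exact commute_even_wval' G (by simp) _

lemma commute_Efac_wval (i : Fin n) (m : List (Sym n)) :
    Commute (Efac G i) (wval G m) := by
  rw [Efac]
  refine Commute.add_left (Commute.add_left (Commute.one_left _)
    (Commute.smul_left (Commute.add_left ?_ ?_) _)) ?_ <;>
    exact commute_even_wval' G (by simp) m

lemma Efac_mem_only (i : Fin n) : Efac G i ∈ Wgen G (onlyIdx i) := by
  rw [Efac]
  refine add_mem (add_mem (one_mem_Wgen G _) (Submodule.smul_mem _ _ (add_mem ?_ ?_))) ?_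
  · refine wval_mem_Wgen G ?_
    intro s hs
    simp only [List.mem_cons, List.not_mem_nil, or_false] at hs
    rcases hs with rfl | rfl <;> simp [onlyIdx, pSym, mSym, PSym, MSym]
  · refine wval_mem_Wgen G ?_
    intro s hs
    simp only [List.mem_cons, List.not_mem_nil, or_false] at hs
    rcases hs with rfl | rfl <;> simp [onlyIdx, pSym, mSym, PSym, MSym]
  · refine wval_mem_Wgen G ?_
    intro s hs
    simp only [List.mem_cons, List.not_mem_nil, or_false] at hs
    rcases hs with rfl | rfl | rfl | rfl <;> simp [onlyIdx, pSym, mSym, PSym, MSym]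
  
lemma exp_eq_prod_Efac :
    gexp G (2*n) ((-Complex.I) •
        ∑ i, (G.η i true * G.ψ i false + G.ψ i true * G.η i false))
      = ((List.finRange n).map (fun i => Efac G i)).prod := by
  have hx : (-Complex.I) • (∑ i, (G.η i true * G.ψ i false + G.ψ i true * G.η i false))
      = ((List.finRange n).map (fun i => yel G i)).sum := by
    rw [Finset.smul_sum, Fin.sum_univ_def]
    rfl
  rw [hx]
  rw [gexp_list_sum G _ ?h3 ?hc (2*n) (by simp)]
  case h3 =>
    intro z hz
    simp only [List.mem_map] at hz
    obtain ⟨i, -, rfl⟩ := hz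
    exact yel_cube G i
  case hc =>
    intro z hz w hw
    simp only [List.mem_map] at hz hw
    obtain ⟨i, -, rfl⟩ := hz
    obtain ⟨j, -, rfl⟩ := hw
    exact commute_yel G i j
  rw [List.map_map]
  refine congrArg List.prod (List.map_congr_left ?_)
  intro i hi
  have hn : 0 < n := i.pos
  exact gexp_yel G i (2*n) (by omega)

end GFT
namespace GFT
variable {n : ℕ} (G : GrassmannSetup n)

lemma intψ_gval (i : Fin n) (ε : Bool) (s : Sym n) :
    G.intψ i ε (gval G s) = if s = Sum.inl (i, ε) then 1 else 0 := by
  rw [← mul_one (gval G s), intψ_gval_mul, G.intψ_one, mul_zero, sub_zero]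

def Gw (S : Finset (Fin n × Bool)) (i : Fin n) : List (Sym n) :=
  (if (i, true) ∈ S then [pSym i] else []) ++ (if (i, false) ∈ S then [mSym i] else [])

def Hw (S : Finset (Fin n × Bool)) (i : Fin n) : List (Sym n) :=
  (if (i, false) ∈ S then [] else [PSym i]) ++ (if (i, true) ∈ S then [] else [MSym i])

noncomputable def cD (S : Finset (Fin n × Bool)) (i : Fin n) : ℂ :=
  if (((i, true) ∈ S) ↔ ((i, false) ∈ S)) then -1 else -Complex.I

lemma wval_mul (l m : List (Sym n)) : wval G l * wval G m = wval G (l ++ m) :=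
  (wval_append G l m).symm

@[simp] lemma pSym_eq_inl (i : Fin n) (p : Fin n × Bool) :
    pSym i = Sum.inl p ↔ p = (i, true) := by simp [pSym, eq_comm]
@[simp] lemma mSym_eq_inl (i : Fin n) (p : Fin n × Bool) :
    mSym i = Sum.inl p ↔ p = (i, false) := by simp [mSym, eq_comm]
@[simp] lemma PSym_eq_inl (i : Fin n) (p : Fin n × Bool) :
    PSym i = Sum.inl p ↔ False := by simp [PSym]
@[simp] lemma MSym_eq_inl (i : Fin n) (p : Fin n × Bool) :
    MSym i = Sum.inl p ↔ False := by simp [MSym]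

lemma intψ_hit (i : Fin n) (ε : Bool) (v : G.A) :
    G.intψ i ε (G.ψ i ε * v) = v - G.ψ i ε * G.intψ i ε v := by
  rw [G.intψ_ψ_mul]; simp

lemma intψ_miss (i : Fin n) (ε ε' : Bool) (h : ε ≠ ε') (v : G.A) :
    G.intψ i ε (G.ψ i ε' * v) = -(G.ψ i ε' * G.intψ i ε v) := by
  rw [G.intψ_ψ_mul, if_neg (by simp [h]), zero_sub]

lemma intψ_hit_one (i : Fin n) (ε : Bool) : G.intψ i ε (G.ψ i ε) = 1 := by
  rw [← mul_one (G.ψ i ε), intψ_hit, G.intψ_one, mul_zero, sub_zero]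

lemma intψ_miss_one (i : Fin n) (ε ε' : Bool) (h : ε ≠ ε') :
    G.intψ i ε (G.ψ i ε') = 0 := by
  rw [← mul_one (G.ψ i ε'), intψ_miss G i ε ε' h, G.intψ_one, mul_zero, neg_zero]

lemma intψ_eta_one (i : Fin n) (ε : Bool) (j : Fin n) (ε' : Bool) :
    G.intψ i ε (G.η j ε') = 0 := by
  rw [← mul_one (G.η j ε'), G.intψ_η_mul, G.intψ_one, mul_zero, neg_zero]

lemma ord_ηψ (j : Fin n) (ε' : Bool) (i : Fin n) (ε : Bool) :
    G.η j ε' * G.ψ i ε = -(G.ψ i ε * G.η j ε') := by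
  rw [G.anticomm_ψη, neg_neg]

lemma ord_ηψ' (j : Fin n) (ε' : Bool) (i : Fin n) (ε : Bool) (v : G.A) :
    G.η j ε' * (G.ψ i ε * v) = -(G.ψ i ε * (G.η j ε' * v)) := by
  rw [← mul_assoc, ord_ηψ, neg_mul, mul_assoc]

lemma ord_ψψ (i : Fin n) :
    G.ψ i false * G.ψ i true = -(G.ψ i true * G.ψ i false) := G.anticomm_ψψ _ _ _ _

lemma ord_ψψ' (i : Fin n) (v : G.A) :
    G.ψ i false * (G.ψ i true * v) = -(G.ψ i true * (G.ψ i false * v)) := by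
  rw [← mul_assoc, ord_ψψ, neg_mul, mul_assoc]

lemma F_Efac_Gw (i : Fin n) (S : Finset (Fin n × Bool)) :
    G.intψ i true (G.intψ i false (Efac G i * wval G (Gw S i)))
      = cD S i • wval G (Hw S i) := by
  by_cases h1 : (i,true) ∈ S <;> by_cases h2 : (i,false) ∈ S <;>
    simp [Efac, Gw, Hw, cD, h1, h2, add_mul, smul_mul_assoc, one_mul, wval_mul,
      map_add, map_smul, map_sub, map_neg, G.intψ_one, G.intψ_η_mul,
      intψ_hit, intψ_miss G i true false (by simp), intψ_miss G i false true (by simp),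
      intψ_hit_one, intψ_miss_one G i true false (by simp),
      intψ_miss_one G i false true (by simp), intψ_eta_one,
      mul_sub, sub_mul, mul_add, mul_one,
      one_mul, mul_zero, zero_mul, mul_assoc, neg_mul, mul_neg, neg_neg, smul_neg,
      neg_smul, sub_zero, zero_sub, ord_ηψ, ord_ηψ', ord_ψψ, ord_ψψ']

end GFT
namespace GFT
variable {n : ℕ} (G : GrassmannSetup n)

noncomputable def foldF (ℓ : List (Fin n)) : G.A →ₗ[ℂ] G.A :=
  (ℓ.map fun i => (G.intψ i true).comp (G.intψ i false)).foldr (fun f g => f.comp g)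
    LinearMap.id

@[simp] lemma foldF_nil (v : G.A) : foldF G [] v = v := rfl

@[simp] lemma foldF_cons (i : Fin n) (ℓ : List (Fin n)) (v : G.A) :
    foldF G (i :: ℓ) v = G.intψ i true (G.intψ i false (foldF G ℓ v)) := rfl

lemma intψAll_eq_foldF : intψAll G = foldF G (List.finRange n) := rfl

lemma foldF_pull {i : Fin n} {z : G.A} (hz : z ∈ Wgen G (onlyIdx i))
    (ℓ : List (Fin n)) (hi : i ∉ ℓ) (v : G.A) :
    foldF G ℓ (z * v) = z * foldF G ℓ v := by
  induction ℓ with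
  | nil => simp
  | cons j ℓ ih =>
    have hij : j ≠ i := fun hc => hi (hc ▸ (by simp : j ∈ j :: ℓ))
    have hz' : z ∈ Wgen G (avoids j) :=
      Wgen_mono G (fun s hs => onlyIdx_avoids hij hs) hz
    rw [foldF_cons, ih (fun hc => hi (List.mem_cons_of_mem _ hc)),
      F_mul_of_avoids G hz', foldF_cons]

noncomputable def Dfac (S : Finset (Fin n × Bool)) (i : Fin n) : G.A :=
  cD S i • wval G (Hw S i)

lemma Hw_inr (S : Finset (Fin n × Bool)) (i : Fin n) (s : Sym n)
    (hs : s ∈ Hw S i) : ∃ p, s = Sum.inr p := by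
  rcases s with p | p
  · exfalso
    simp only [Hw, List.mem_append] at hs
    rcases hs with h | h <;> split_ifs at h <;> simp [PSym, MSym] at h
  · exact ⟨p, rfl⟩

lemma wval_flatMap (ℓ : List (Fin n)) (f : Fin n → List (Sym n)) :
    wval G (ℓ.flatMap f) = (ℓ.map (fun j => wval G (f j))).prod := by
  induction ℓ with
  | nil => simp
  | cons i ℓ ih => simp [List.flatMap_cons, wval_append, ih]

lemma Dprod (S : Finset (Fin n × Bool)) (ℓ : List (Fin n)) :
    (ℓ.map (fun j => Dfac G S j)).prod
      = ((ℓ.map (cD S)).prod) • wval G (ℓ.flatMap (fun j => Hw S j)) := by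
  induction ℓ with
  | nil => simp
  | cons i ℓ ih =>
    rw [List.map_cons, List.prod_cons, List.flatMap_cons, ih, Dfac]
    rw [wval_append, smul_mul_assoc, mul_smul_comm, smul_smul, List.map_cons,
      List.prod_cons]

lemma Gw_only (S : Finset (Fin n × Bool)) (i : Fin n) :
    ∀ s ∈ Gw S i, onlyIdx i s := by
  intro s hs
  simp only [Gw, List.mem_append] at hs
  rcases hs with h | h <;> split_ifs at h <;> simp [pSym, mSym] at h <;>
    (subst h; simp [onlyIdx, pSym, mSym])

lemma Cfac_mem_only (S : Finset (Fin n × Bool)) (i : Fin n) :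
    Efac G i * wval G (Gw S i) ∈ Wgen G (onlyIdx i) :=
  Wgen_mul_mem G (Efac_mem_only G i) (wval_mem_Wgen G (Gw_only S i))

lemma Cfac_mem_Wall (S : Finset (Fin n × Bool)) (i : Fin n) :
    Efac G i * wval G (Gw S i) ∈ Wall G :=
  Wgen_mono G (fun _ _ => trivial) (Cfac_mem_only G S i)

lemma foldF_prod (S : Finset (Fin n × Bool)) (ℓ : List (Fin n)) (hnd : ℓ.Nodup) :
    foldF G ℓ ((ℓ.map (fun j => Efac G j * wval G (Gw S j))).prod)
      = (ℓ.map (fun j => Dfac G S j)).prod := by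
  induction ℓ with
  | nil => simp
  | cons i ℓ ih =>
    have hnd' : ℓ.Nodup := (List.nodup_cons.1 hnd).2
    have hi : i ∉ ℓ := (List.nodup_cons.1 hnd).1
    rw [List.map_cons, List.prod_cons, foldF_cons,
      foldF_pull G (Cfac_mem_only G S i) ℓ hi, ih hnd']
    rw [Dprod G S ℓ]
    rw [mul_smul_comm, map_smul, map_smul]
    have hw : ∀ ε : Bool, Sum.inl (i, ε) ∉ ℓ.flatMap (fun j => Hw S j) := by
      intro ε hc
      obtain ⟨j, -, hj⟩ := List.mem_flatMap.1 hc
      obtain ⟨p, hp⟩ := Hw_inr S j _ hj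
      exact (by simp at hp : False)
    rw [F_mul_wval G (Cfac_mem_Wall G S i) i hw, F_Efac_Gw]
    rw [List.map_cons, List.prod_cons, Dprod G S ℓ]
    rw [show Dfac G S i = cD S i • wval G (Hw S i) from rfl]
    rw [mul_smul_comm]

end GFT
namespace GFT
variable {n : ℕ} (G : GrassmannSetup n)

def eSet (S : Finset (Fin n × Bool)) : Finset (Fin n × Bool) :=
  Finset.univ.filter (fun p => (p.1, !p.2) ∉ S)

lemma mem_eSet (S : Finset (Fin n × Bool)) (p : Fin n × Bool) :
    p ∈ eSet S ↔ (p.1, !p.2) ∉ S := by simp [eSet]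

lemma eSet_invol : Function.Involutive (eSet (n := n)) := by
  intro S
  ext p
  rw [mem_eSet, mem_eSet]
  simp

lemma ψMonomial_eq (S : Finset (Fin n × Bool)) :
    ψMonomial G S = ((List.finRange n).map (fun i => wval G (Gw S i))).prod := by
  unfold ψMonomial
  congr 1
  refine List.map_congr_left ?_
  intro i _
  by_cases h1 : (i,true) ∈ S <;> by_cases h2 : (i,false) ∈ S <;>
    simp [Gw, h1, h2, wval, pSym, mSym, gval]

lemma ηMonomial_eq (S : Finset (Fin n × Bool)) :
    ηMonomial G (eSet S) = ((List.finRange n).map (fun i => wval G (Hw S i))).prod := by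
  unfold ηMonomial
  congr 1
  refine List.map_congr_left ?_
  intro i _
  have e1 : ((i,true) ∈ eSet S) ↔ ((i,false) ∉ S) := by rw [mem_eSet]; simp
  have e2 : ((i,false) ∈ eSet S) ↔ ((i,true) ∉ S) := by rw [mem_eSet]; simp
  by_cases h1 : (i,true) ∈ S <;> by_cases h2 : (i,false) ∈ S <;>
    simp [Hw, h1, h2, e1, e2, wval, PSym, MSym, gval]

lemma E_G_prod (S : Finset (Fin n × Bool)) (ℓ : List (Fin n)) :
    (ℓ.map (fun i => Efac G i)).prod * (ℓ.map (fun i => wval G (Gw S i))).prod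
      = (ℓ.map (fun i => Efac G i * wval G (Gw S i))).prod := by
  induction ℓ with
  | nil => simp
  | cons i ℓ ih =>
    simp only [List.map_cons, List.prod_cons]
    have hcomm : Commute (wval G (Gw S i)) ((ℓ.map (fun j => Efac G j)).prod) :=
      Commute.list_prod_right _ _ (fun z hz => by
        obtain ⟨j, -, rfl⟩ := List.mem_map.1 hz
        exact (commute_Efac_wval G j (Gw S i)).symm)
    rw [mul_assoc, ← mul_assoc ((ℓ.map (fun j => Efac G j)).prod), ← hcomm.eq,
      mul_assoc, ← mul_assoc, ih]

noncomputable def uC (S : Finset (Fin n × Bool)) : ℂ := ∏ i : Fin n, cD S i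

lemma norm_uC (S : Finset (Fin n × Bool)) : ‖uC (n := n) S‖ = 1 := by
  rw [uC, norm_prod]
  refine Finset.prod_eq_one (fun i _ => ?_)
  rw [cD]
  split_ifs <;> simp

lemma gf_monomial (S : Finset (Fin n × Bool)) :
    grassmannFourier G (ψMonomial G S) = uC S • ηMonomial G (eSet S) := by
  rw [grassmannFourier, exp_eq_prod_Efac, ψMonomial_eq, E_G_prod, intψAll_eq_foldF,
    foldF_prod G S _ (List.nodup_finRange n), Dprod, ηMonomial_eq, ← wval_flatMap]
  unfold uC
  rw [Fin.prod_univ_def]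

end GFT
namespace GFT
variable {n : ℕ} (G : GrassmannSetup n)

noncomputable def Mspan : Submodule ℂ G.A :=
  Submodule.span ℂ (Set.range (fun S => ψMonomial G S))

lemma Gw_eq_of_agree {S S' : Finset (Fin n × Bool)} {j : Fin n}
    (hag : ∀ p : Fin n × Bool, p.1 ≠ j → (p ∈ S' ↔ p ∈ S)) {i : Fin n} (hij : i ≠ j) :
    Gw S' i = Gw S i := by
  unfold Gw
  rw [if_congr (hag (i,true) (by simpa using hij)) rfl rfl,
    if_congr (hag (i,false) (by simpa using hij)) rfl rfl]

lemma psi_mul_list (j : Fin n) (ε : Bool) :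
    ∀ (ℓ : List (Fin n)), ℓ.Nodup → j ∈ ℓ → ∀ S : Finset (Fin n × Bool),
    ∃ (c : ℂ) (S' : Finset (Fin n × Bool)),
      (∀ p : Fin n × Bool, p.1 ≠ j → (p ∈ S' ↔ p ∈ S)) ∧
      gval G (Sum.inl (j, ε)) * (ℓ.map (fun i => wval G (Gw S i))).prod
        = c • (ℓ.map (fun i => wval G (Gw S' i))).prod := by
  intro ℓ
  induction ℓ with
  | nil => intro _ hj; exact (List.not_mem_nil hj).elim
  | cons i ℓ ih =>
    intro hnd hj S
    have hi : i ∉ ℓ := (List.nodup_cons.1 hnd).1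
    have hnd' : ℓ.Nodup := (List.nodup_cons.1 hnd).2
    by_cases hij : i = j
    · subst hij
      have hmap : ∀ S' : Finset (Fin n × Bool),
          (∀ p : Fin n × Bool, p.1 ≠ i → (p ∈ S' ↔ p ∈ S)) →
          (ℓ.map (fun k => wval G (Gw S' k))).prod
            = (ℓ.map (fun k => wval G (Gw S k))).prod := by
        intro S' hag
        refine congrArg List.prod (List.map_congr_left ?_)
        intro k hk
        rw [Gw_eq_of_agree hag (fun hc => hi (hc ▸ hk))]
      have hins : ∀ ε' : Bool, ∀ p : Fin n × Bool, p.1 ≠ i →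
          (p ∈ insert (i, ε') S ↔ p ∈ S) := by
        intro ε' p hp
        rw [Finset.mem_insert]
        constructor
        · rintro (rfl | h)
          · exact absurd rfl hp
          · exact h
        · exact Or.inr
      rcases Bool.eq_false_or_eq_true ε with hε | hε
      · subst hε
        by_cases h1 : (i, true) ∈ S
        · refine ⟨0, S, fun p _ => Iff.rfl, ?_⟩
          simp only [List.map_cons, List.prod_cons]
          rw [← mul_assoc, ← wval_cons, zero_smul]
          by_cases h2 : (i, false) ∈ S
          · rw [show (Sum.inl (i, true) :: Gw S i : List (Sym n))
                = pSym i :: pSym i :: [mSym i] from by simp [Gw, h1, h2, pSym, mSym],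
              wval_dup, zero_mul]
          · rw [show (Sum.inl (i, true) :: Gw S i : List (Sym n))
                = pSym i :: pSym i :: [] from by simp [Gw, h1, h2, pSym],
              wval_dup, zero_mul]
        · refine ⟨1, insert (i, true) S, hins true, ?_⟩
          simp only [List.map_cons, List.prod_cons]
          rw [hmap _ (hins true), ← mul_assoc, ← wval_cons, one_smul]
          congr 1
          by_cases h2 : (i, false) ∈ S
          · rw [show (Sum.inl (i, true) :: Gw S i : List (Sym n))
                = pSym i :: [mSym i] from by simp [Gw, h1, h2, pSym, mSym],
              show Gw (insert (i, true) S) i = pSym i :: [mSym i] from by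
                simp [Gw, h1, h2, Finset.mem_insert, pSym, mSym]]
          · rw [show (Sum.inl (i, true) :: Gw S i : List (Sym n))
                = pSym i :: [] from by simp [Gw, h1, h2, pSym],
              show Gw (insert (i, true) S) i = pSym i :: [] from by
                simp [Gw, h1, h2, Finset.mem_insert, pSym]]
      · subst hε
        by_cases h2 : (i, false) ∈ S
        · refine ⟨0, S, fun p _ => Iff.rfl, ?_⟩
          simp only [List.map_cons, List.prod_cons]
          rw [← mul_assoc, ← wval_cons, zero_smul]
          by_cases h1 : (i, true) ∈ S
          · rw [show (Sum.inl (i, false) :: Gw S i : List (Sym n))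
                = mSym i :: pSym i :: [mSym i] from by simp [Gw, h1, h2, mSym, pSym],
              wval_swap, wval_cons,
              show (mSym i :: [mSym i] : List (Sym n)) = mSym i :: mSym i :: [] from rfl,
              wval_dup, mul_zero, neg_zero, zero_mul]
          · rw [show (Sum.inl (i, false) :: Gw S i : List (Sym n))
                = mSym i :: mSym i :: [] from by simp [Gw, h1, h2, mSym],
              wval_dup, zero_mul]
        · refine ⟨if (i,true) ∈ S then -1 else 1, insert (i, false) S, hins false, ?_⟩
          simp only [List.map_cons, List.prod_cons]
          rw [hmap _ (hins false), ← mul_assoc, ← wval_cons]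
          by_cases h1 : (i, true) ∈ S
          · rw [show (Sum.inl (i, false) :: Gw S i : List (Sym n))
                = mSym i :: pSym i :: [] from by simp [Gw, h1, h2, mSym, pSym],
              wval_swap,
              show Gw (insert (i, false) S) i = pSym i :: mSym i :: [] from by
                simp [Gw, h1, h2, Finset.mem_insert, pSym, mSym],
              if_pos h1]
            rw [neg_mul, neg_smul, one_smul]
          · rw [show (Sum.inl (i, false) :: Gw S i : List (Sym n))
                = mSym i :: [] from by simp [Gw, h1, h2, mSym],
              show Gw (insert (i, false) S) i = mSym i :: [] from by
                simp [Gw, h1, h2, Finset.mem_insert, mSym],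
              if_neg h1, one_smul]
    · have hjℓ : j ∈ ℓ := by
        rcases List.mem_cons.1 hj with hc | hc
        · exact absurd hc.symm hij
        · exact hc
      obtain ⟨c, S', hag, hrec⟩ := ih hnd' hjℓ S
      refine ⟨(-1 : ℂ)^(Gw S i).length * c, S', hag, ?_⟩
      simp only [List.map_cons, List.prod_cons]
      rw [← mul_assoc, gval_mul_wval, smul_mul_assoc, mul_assoc, hrec,
        Gw_eq_of_agree hag (Ne.symm (fun hc => hij hc.symm))]
      rw [mul_smul_comm, smul_smul]

lemma ψMonomial_empty : ψMonomial G ∅ = 1 := by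
  unfold ψMonomial
  rw [List.prod_eq_one]
  intro x hx
  obtain ⟨i, -, rfl⟩ := List.mem_map.1 hx
  simp

lemma ηMonomial_empty : ηMonomial G ∅ = 1 := by
  unfold ηMonomial
  rw [List.prod_eq_one]
  intro x hx
  obtain ⟨i, -, rfl⟩ := List.mem_map.1 hx
  simp

lemma psi_mul_monomial (j : Fin n) (ε : Bool) (S : Finset (Fin n × Bool)) :
    G.ψ j ε * ψMonomial G S ∈ Mspan G := by
  obtain ⟨c, S', -, h⟩ := psi_mul_list G j ε (List.finRange n)
    (List.nodup_finRange n) (List.mem_finRange j) S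
  have : G.ψ j ε * ψMonomial G S = c • ψMonomial G S' := by
    rw [ψMonomial_eq, ψMonomial_eq]
    exact h
  rw [this]
  exact Submodule.smul_mem _ _ (Submodule.subset_span ⟨S', rfl⟩)

lemma psi_mul_mem (j : Fin n) (ε : Bool) {z : G.A} (hz : z ∈ Mspan G) :
    G.ψ j ε * z ∈ Mspan G := by
  induction hz using Submodule.span_induction with
  | mem a ha => obtain ⟨S, rfl⟩ := ha; exact psi_mul_monomial G j ε S
  | zero => simp
  | add x y hx hy ihx ihy => rw [mul_add]; exact add_mem ihx ihy
  | smul c x hx ihx => rw [mul_smul_comm]; exact Submodule.smul_mem _ c ihx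

lemma adjoin_le_Mspan {f : G.A}
    (hf : f ∈ Algebra.adjoin ℂ (Set.range fun p : Fin n × Bool => G.ψ p.1 p.2)) :
    f ∈ Mspan G := by
  have key : ∀ m ∈ Mspan G, f * m ∈ Mspan G := by
    induction hf using Algebra.adjoin_induction with
    | mem x hx =>
      obtain ⟨p, rfl⟩ := hx
      exact fun m hm => psi_mul_mem G p.1 p.2 hm
    | algebraMap r =>
      intro m hm
      rw [Algebra.algebraMap_eq_smul_one, smul_mul_assoc, one_mul]
      exact Submodule.smul_mem _ _ hm
    | add x y hx hy ihx ihy =>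
      intro m hm
      rw [add_mul]
      exact add_mem (ihx m hm) (ihy m hm)
    | mul x y hx hy ihx ihy =>
      intro m hm
      rw [mul_assoc]
      exact ihx _ (ihy m hm)
  have h1 : (1 : G.A) ∈ Mspan G := by
    rw [← ψMonomial_empty G]
    exact Submodule.subset_span ⟨∅, rfl⟩
  simpa using key 1 h1

end GFT
namespace GFT
variable {n : ℕ} (G : GrassmannSetup n)

lemma gf_sum {ι : Type} (t : Finset ι) (c : ι → ℂ) (v : ι → G.A) :
    grassmannFourier G (∑ S ∈ t, c S • v S)
      = ∑ S ∈ t, c S • grassmannFourier G (v S) := by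
  unfold grassmannFourier
  rw [Finset.mul_sum, map_sum]
  refine Finset.sum_congr rfl fun S _ => ?_
  rw [mul_smul_comm, map_smul]

end GFT


/-- The Grassmann Fourier transform preserves the ℓ¹ norm: with `b` the monomial basis
`b (S,T) = ψ^S η^T` and `‖f‖ = Σ |coefficients|`, one has `‖f̂‖ = ‖f‖` for every element
`f = f(ψ)` of the subalgebra generated by the `ψ`'s; in particular each coefficient of
`f̂` equals a coefficient of `f` multiplied by a complex number of modulus one. -/
theorem grassmann_fourier_preserves_l1_norm (n : ℕ) (G : GrassmannSetup n)
    (b : Module.Basis (Finset (Fin n × Bool) × Finset (Fin n × Bool)) ℂ G.A)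
    (hb : ∀ S T, b (S, T) = ψMonomial G S * ηMonomial G T)
    (f : G.A)
    (hf : f ∈ Algebra.adjoin ℂ (Set.range fun p : Fin n × Bool => G.ψ p.1 p.2)) :
    (∑ P : Finset (Fin n × Bool) × Finset (Fin n × Bool),
        ‖b.repr (grassmannFourier G f) P‖)
      = (∑ P : Finset (Fin n × Bool) × Finset (Fin n × Bool), ‖b.repr f P‖)
    ∧ ∃ e : Finset (Fin n × Bool) ≃ Finset (Fin n × Bool),
        ∃ u : Finset (Fin n × Bool) → ℂ, ∀ S, ‖u S‖ = 1 ∧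
          b.repr (grassmannFourier G f) (∅, e S) = u S * b.repr f (S, ∅) := by
  classical
  obtain ⟨c, hc⟩ := (Submodule.mem_span_range_iff_exists_fun ℂ).1 (GFT.adjoin_le_Mspan G hf)
  -- `hc : ∑ S, c S • ψMonomial G S = f`
  have hf2 : f = ∑ S, c S • b (S, ∅) := by
    rw [← hc]
    refine Finset.sum_congr rfl fun S _ => ?_
    rw [hb, GFT.ηMonomial_empty, mul_one]
  have hrf : ∀ S₀ T₀, b.repr f (S₀, T₀) = if T₀ = ∅ then c S₀ else 0 := by
    intro S₀ T₀
    rw [hf2, map_sum, Finsupp.finset_sum_apply]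
    have hterm : ∀ S, (b.repr (c S • b (S, ∅))) (S₀, T₀)
        = c S * (if (S, (∅ : Finset (Fin n × Bool))) = (S₀, T₀) then 1 else 0) := by
      intro S
      rw [map_smul, Finsupp.smul_apply, Module.Basis.repr_self, Finsupp.single_apply, smul_eq_mul]
    rw [Finset.sum_congr rfl (fun S _ => hterm S)]
    by_cases hT : T₀ = ∅
    · subst hT
      rw [if_pos rfl, Finset.sum_eq_single S₀]
      · simp
      · intro S _ hS
        rw [if_neg (by simp [Prod.ext_iff, hS]), mul_zero]
      · intro h; exact absurd (Finset.mem_univ S₀) h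
    · rw [if_neg hT]
      refine Finset.sum_eq_zero fun S _ => ?_
      rw [if_neg (by simp [Prod.ext_iff]; intro _; exact fun h => hT h.symm), mul_zero]
  have hgf : grassmannFourier G f = ∑ S, (c S * GFT.uC S) • b (∅, GFT.eSet S) := by
    rw [← hc, GFT.gf_sum]
    refine Finset.sum_congr rfl fun S _ => ?_
    rw [GFT.gf_monomial, hb, GFT.ψMonomial_empty, one_mul, smul_smul]
  have hrg : ∀ S₀ T₀, b.repr (grassmannFourier G f) (S₀, T₀)
      = if S₀ = ∅ then c (GFT.eSet T₀) * GFT.uC (GFT.eSet T₀) else 0 := by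
    intro S₀ T₀
    rw [hgf, map_sum, Finsupp.finset_sum_apply]
    have hterm : ∀ S, (b.repr ((c S * GFT.uC S) • b (∅, GFT.eSet S))) (S₀, T₀)
        = (c S * GFT.uC S) * (if ((∅ : Finset (Fin n × Bool)), GFT.eSet S) = (S₀, T₀)
            then 1 else 0) := by
      intro S
      rw [map_smul, Finsupp.smul_apply, Module.Basis.repr_self, Finsupp.single_apply, smul_eq_mul]
    rw [Finset.sum_congr rfl (fun S _ => hterm S)]
    by_cases hS : S₀ = ∅
    · subst hS
      rw [if_pos rfl, Finset.sum_eq_single (GFT.eSet T₀)]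
      · rw [if_pos (by rw [GFT.eSet_invol])]
        rw [mul_one]
      · intro S _ hS
        rw [if_neg (by
          simp only [Prod.mk.injEq, true_and]
          intro h
          exact hS (by rw [← h, GFT.eSet_invol])), mul_zero]
      · intro h; exact absurd (Finset.mem_univ _) h
    · rw [if_neg hS]
      refine Finset.sum_eq_zero fun S _ => ?_
      rw [if_neg (by simp [Prod.ext_iff]; intro h; exact absurd h.symm hS), mul_zero]
  constructor
  · rw [Fintype.sum_prod_type, Fintype.sum_prod_type]
    have hL : ∀ S₀ : Finset (Fin n × Bool),
        (∑ T₀, ‖b.repr (grassmannFourier G f) (S₀, T₀)‖)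
          = if S₀ = ∅ then ∑ T₀, ‖c (GFT.eSet T₀)‖ else 0 := by
      intro S₀
      by_cases hS : S₀ = ∅
      · subst hS
        rw [if_pos rfl]
        refine Finset.sum_congr rfl fun T₀ _ => ?_
        rw [hrg, if_pos rfl, norm_mul, GFT.norm_uC, mul_one]
      · rw [if_neg hS]
        refine Finset.sum_eq_zero fun T₀ _ => ?_
        rw [hrg, if_neg hS, norm_zero]
    have hR : ∀ S₀ : Finset (Fin n × Bool),
        (∑ T₀, ‖b.repr f (S₀, T₀)‖) = ‖c S₀‖ := by
      intro S₀
      rw [Finset.sum_eq_single ∅]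
      · rw [hrf, if_pos rfl]
      · intro T₀ _ hT; rw [hrf, if_neg hT, norm_zero]
      · intro h; exact absurd (Finset.mem_univ _) h
    rw [Finset.sum_congr rfl (fun S₀ _ => hL S₀),
      Finset.sum_congr rfl (fun S₀ _ => hR S₀)]
    rw [Finset.sum_ite_eq' Finset.univ (∅ : Finset (Fin n × Bool))
      (fun _ => ∑ T₀, ‖c (GFT.eSet T₀)‖)]
    rw [if_pos (Finset.mem_univ _)]
    exact Equiv.sum_comp (Function.Involutive.toPerm _ GFT.eSet_invol) (fun S => ‖c S‖)
  · refine ⟨Function.Involutive.toPerm _ GFT.eSet_invol, fun S => GFT.uC S,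
      fun S => ⟨GFT.norm_uC S, ?_⟩⟩
    have : (Function.Involutive.toPerm _ GFT.eSet_invol) S = GFT.eSet S := rfl
    rw [this, hrg, if_pos rfl, GFT.eSet_invol, hrf, if_pos rfl, mul_comm]
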